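/- For w ∈ Sₙ and 1 ≤ i ≤ n−1, the simple transposition sᵢ is a right descent of w (i.e., l(w sᵢ) < l(w), equivalently w(i) > w(i+1)) if and only if i belongs to the tableau descent set of the recording tableau Q(w), i.e., i+1 lies strictly below and weakly to the left of i in Q(w). -/

import Mathlib

/-- Schensted row insertion of `x` into a tableau given as a list of rows. -/
def rowInsert : List (List ℕ) → ℕ → List (List ℕ)
  | [], x => [[x]]
  | r :: rs, x =>
    match r.findIdx? (fun y => x < y) with
    | none => (r ++ [x]) :: rs
    | some i => r.set i x :: rowInsert rs (r.getD i 0)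

/-- The shape of a tableau: the list of row lengths. -/
def shapeOf (T : List (List ℕ)) : List ℕ := T.map List.length

/-- Add a box labelled `k` at the end of row `row` (creating the row if needed). -/
def addBox (Q : List (List ℕ)) (row k : ℕ) : List (List ℕ) :=
  if row < Q.length then Q.set row (Q.getD row [] ++ [k]) else Q ++ [[k]]

/-- The Robinson–Schensted correspondence on words: the pair `(P, Q)` of the
insertion tableau and the recording tableau. -/
def RSpair (w : List ℕ) : List (List ℕ) × List (List ℕ) :=
  (w.zipIdx.map Prod.swap).foldl
    (fun PQ ix =>
      let P' := rowInsert PQ.1 ix.2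
      let row := (List.range P'.length).findIdx
        (fun j => (shapeOf PQ.1).getD j 0 ≠ (shapeOf P').getD j 0)
      (P', addBox PQ.2 row (ix.1 + 1)))
    ([], [])

/-- The one-line word (with values in `{1, …, n}`) of a permutation of `Fin n`. -/
def permWord {n : ℕ} (w : Equiv.Perm (Fin n)) : List ℕ :=
  List.ofFn fun i => (w i : ℕ) + 1

/-- The insertion tableau `P(w)` of a permutation. -/
def RSP {n : ℕ} (w : Equiv.Perm (Fin n)) : List (List ℕ) := (RSpair (permWord w)).1

/-- The recording tableau `Q(w)` of a permutation. -/
def RSQ {n : ℕ} (w : Equiv.Perm (Fin n)) : List (List ℕ) := (RSpair (permWord w)).2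


/-- The (0-indexed) row of the tableau `T` in which the entry `m` lies. -/
def rowOf (T : List (List ℕ)) (m : ℕ) : ℕ := T.findIdx (fun r => m ∈ r)

/-- The (0-indexed) column of the tableau `T` in which the entry `m` lies. -/
def colOf (T : List (List ℕ)) (m : ℕ) : ℕ :=
  (T.getD (rowOf T m) []).findIdx (fun y => y = m)

open List

/-- position (row, col) of the new box created by `rowInsert T x`. -/
def insPos : List (List ℕ) → ℕ → ℕ × ℕ
  | [], _ => (0, 0)
  | r :: rs, x =>
    match r.findIdx? (fun y => x < y) with
    | none => (0, r.length)
    | some i => ((insPos rs (r.getD i 0)).1 + 1, (insPos rs (r.getD i 0)).2)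

@[simp] lemma shapeOf_nil : shapeOf [] = [] := rfl
@[simp] lemma shapeOf_cons (r : List ℕ) (rs : List (List ℕ)) :
    shapeOf (r :: rs) = r.length :: shapeOf rs := rfl

lemma shape_getD (T : List (List ℕ)) (j : ℕ) :
    (shapeOf T).getD j 0 = (T.getD j []).length := by
  rcases lt_or_ge j T.length with h | h
  · rw [getD_eq_getElem _ _ (by simpa [shapeOf] using h), getD_eq_getElem _ _ h]
    simp [shapeOf]
  · rw [getD_eq_default _ _ (by simpa [shapeOf] using h), getD_eq_default _ _ h]
    simp

-- findIdx? facts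
lemma fi_none {p : ℕ → Bool} {l : List ℕ} (h : l.findIdx? p = none) :
    ∀ j < l.length, ¬ (p (l.getD j 0) = true) := by
  intro j hj
  rw [getD_eq_getElem _ _ hj]
  have := (findIdx?_eq_none_iff).1 h l[j] (getElem_mem hj)
  simp [this]

lemma fi_some {p : ℕ → Bool} {l : List ℕ} {i : ℕ} (h : l.findIdx? p = some i) :
    i < l.length ∧ p (l.getD i 0) = true ∧ ∀ j < i, ¬ (p (l.getD j 0) = true) := by
  obtain ⟨hlt, hfi⟩ := (findIdx?_eq_some_iff_findIdx_eq).1 h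
  obtain ⟨hp, hmin⟩ := (findIdx_eq hlt).1 hfi
  refine ⟨hlt, by rwa [getD_eq_getElem _ _ hlt], fun j hj => ?_⟩
  rw [getD_eq_getElem _ _ (hj.trans hlt)]
  simp [hmin j hj]

lemma fi_le_of_p {p : ℕ → Bool} {l : List ℕ} {j : ℕ} (hj : j < l.length)
    (hp : p (l.getD j 0) = true) : ∃ i, l.findIdx? p = some i ∧ i ≤ j := by
  have hex : ∃ x ∈ l, p x = true := ⟨l[j], getElem_mem hj, by rwa [getD_eq_getElem _ _ hj] at hp⟩
  refine ⟨l.findIdx p, findIdx?_eq_some_of_exists hex, ?_⟩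
  by_contra hgt
  push_neg at hgt
  obtain ⟨hlt, _, hmin⟩ := fi_some (findIdx?_eq_some_of_exists hex)
  exact hmin j hgt hp

lemma insPos_fst_le (T : List (List ℕ)) (x : ℕ) : (insPos T x).1 ≤ T.length := by
  induction T generalizing x with
  | nil => simp [insPos]
  | cons r rs ih =>
    cases h : r.findIdx? (fun y => x < y) with
    | none => simp [insPos, h]
    | some i =>
      simp only [insPos, h, length_cons]
      exact Nat.succ_le_succ (ih _)

lemma length_rowInsert (T : List (List ℕ)) (x : ℕ) :
    (rowInsert T x).length = max T.length ((insPos T x).1 + 1) := by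
  induction T generalizing x with
  | nil => simp [rowInsert, insPos]
  | cons r rs ih =>
    cases h : r.findIdx? (fun y => x < y) with
    | none => simp [rowInsert, insPos, h]
    | some i =>
      simp only [rowInsert, insPos, h, length_cons, ih]
      omega

lemma shape_rowInsert (T : List (List ℕ)) (x : ℕ) (j : ℕ) :
    (shapeOf (rowInsert T x)).getD j 0 =
      (if j = (insPos T x).1 then 1 else 0) + (shapeOf T).getD j 0 := by
  induction T generalizing x j with
  | nil =>
    simp only [rowInsert, insPos, shape_getD]
    cases j <;> simp
  | cons r rs ih =>
    cases h : r.findIdx? (fun y => x < y) with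
    | none =>
      simp only [rowInsert, insPos, h]
      cases j <;> simp [shape_getD, shapeOf_cons, Nat.add_comm]
    | some i =>
      simp only [rowInsert, insPos, h]
      cases j with
      | zero => simp [shape_getD, length_set]
      | succ j =>
        simp only [shape_getD] at ih ⊢
        simpa [Nat.succ_eq_add_one] using ih (r.getD i 0) j

lemma insPos_snd (T : List (List ℕ)) (x : ℕ) :
    (insPos T x).2 = (shapeOf T).getD (insPos T x).1 0 := by
  induction T generalizing x with
  | nil => simp [insPos, shapeOf]
  | cons r rs ih =>
    cases h : r.findIdx? (fun y => x < y) with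
    | none => simp [insPos, h, shape_getD]
    | some i =>
      simp only [insPos, h, shape_getD] at ih ⊢
      simpa using ih (r.getD i 0)

def Dominates (R r : List ℕ) : Prop :=
  r.length ≤ R.length ∧ ∀ j < r.length, R.getD j 0 < r.getD j 0

def TabInv (T : List (List ℕ)) : Prop :=
  (∀ r ∈ T, r.Pairwise (· < ·)) ∧ T.IsChain Dominates

lemma TabInv.tail {r : List ℕ} {rs : List (List ℕ)} (h : TabInv (r :: rs)) : TabInv rs :=
  ⟨fun s hs => h.1 s (mem_cons_of_mem _ hs), h.2.tail⟩

lemma TabInv.dom {r : List ℕ} {rs : List (List ℕ)} (h : TabInv (r :: rs)) :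
    Dominates r (rs.getD 0 []) := by
  cases rs with
  | nil => exact ⟨Nat.zero_le _, fun j hj => absurd hj (by simp)⟩
  | cons r' rs' => exact (isChain_cons_cons.1 h.2).1

lemma sorted_getD_lt {r : List ℕ} (hs : r.Pairwise (· < ·)) {j j' : ℕ}
    (hj : j < j') (hj' : j' < r.length) : r.getD j 0 < r.getD j' 0 := by
  rw [getD_eq_getElem _ _ (hj.trans hj'), getD_eq_getElem _ _ hj']
  exact pairwise_iff_get.1 hs ⟨j, hj.trans hj'⟩ ⟨j', hj'⟩ hj

lemma getD_set' {α : Type*} {r : List α} {d : α} {i j : ℕ} (hj : j < r.length) (a : α) :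
    (r.set i a).getD j d = if i = j then a else r.getD j d := by
  rw [getD_eq_getElem _ _ (by simpa using hj), getElem_set]
  split
  · rfl
  · exact (getD_eq_getElem _ _ hj).symm

/-- The column of the new box is at most `j` whenever the entry of row 0 in
column `j` (if any) is larger than `y`. -/
lemma ip_col_le : ∀ (T : List (List ℕ)) (y j : ℕ), TabInv T →
    (j < (T.getD 0 []).length → y < (T.getD 0 []).getD j 0) → (insPos T y).2 ≤ j
  | [], y, j, _, _ => by simp [insPos]
  | r :: rs, y, j, hInv, hcol => by
    cases h : r.findIdx? (fun z => y < z) with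
    | none =>
      simp only [insPos, h]
      by_contra hgt
      push_neg at hgt
      have h1 := fi_none h j hgt
      simp only [decide_eq_true_eq] at h1
      exact h1 (by simpa using hcol (by simpa using hgt))
    | some i =>
      obtain ⟨hi, hp, hmin⟩ := fi_some h
      simp only [decide_eq_true_eq] at hp
      have hij : i ≤ j := by
        by_contra hgt
        push_neg at hgt
        have h1 := hmin j hgt
        simp only [decide_eq_true_eq] at h1
        exact h1 (by simpa using hcol (by simpa using hgt.trans hi))
      have hdom := hInv.dom
      simp only [insPos, h]
      refine le_trans (ip_col_le rs (r.getD i 0) i hInv.tail ?_) hij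
      intro hlt
      exact hdom.2 i hlt

/-- Row bumping lemma, ascent case: inserting `a` then `b` with `a < b`,
the second box is weakly above and strictly right of the first. -/
lemma bump_lt : ∀ (T : List (List ℕ)) {a b : ℕ}, TabInv T → a < b →
    (insPos (rowInsert T a) b).1 ≤ (insPos T a).1 ∧
      (insPos T a).2 < (insPos (rowInsert T a) b).2
  | [], a, b, _, hab => by
    have : ([a].findIdx? (fun y => b < y)) = none := by
      rw [findIdx?_eq_none_iff]
      intro x hx
      simp at hx
      simp [hx]
      omega
    simp [rowInsert, insPos, this]
  | r :: rs, a, b, hInv, hab => by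
    cases ha : r.findIdx? (fun y => a < y) with
    | none =>
      have hb : (r ++ [a]).findIdx? (fun y => b < y) = none := by
        rw [findIdx?_eq_none_iff]
        intro x hx
        rcases mem_append.1 hx with hx | hx
        · have := (findIdx?_eq_none_iff).1 ha x hx
          simp at this ⊢
          omega
        · simp at hx
          simp [hx]
          omega
      simp [rowInsert, insPos, ha, hb]
    | some i =>
      obtain ⟨hi, hp, hmin⟩ := fi_some ha
      simp only [decide_eq_true_eq] at hp
      set y := r.getD i 0 with hy
      cases hb : (r.set i a).findIdx? (fun z => b < z) with
      | none =>
        -- b is appended at the end of row 0; need col of a's box < r.length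
        have hcol : (insPos rs y).2 < r.length := by
          have hle : (insPos rs y).2 ≤ i := by
            refine ip_col_le rs y i hInv.tail ?_
            intro hlt
            exact hInv.dom.2 i hlt
          omega
        simp only [rowInsert, insPos, ha, hb, length_set]
        exact ⟨Nat.zero_le _, hcol⟩
      | some i' =>
        obtain ⟨hi', hp', hmin'⟩ := fi_some hb
        rw [length_set] at hi'
        simp only [decide_eq_true_eq] at hp'
        have hii : i < i' := by
          by_contra hle
          push_neg at hle
          rw [getD_set' (lt_of_le_of_lt hle hi) a] at hp'
          rcases eq_or_lt_of_le hle with heq | hlt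
          · rw [if_pos heq.symm] at hp'
            omega
          · rw [if_neg (by omega)] at hp'
            have := hmin i' hlt
            simp only [decide_eq_true_eq] at this
            omega
        have hy' : (r.set i a).getD i' 0 = r.getD i' 0 :=
          (getD_set' hi' a).trans (if_neg (by omega))
        have hyy' : y < r.getD i' 0 := sorted_getD_lt (hInv.1 r (mem_cons_self)) hii hi'
        have IH := bump_lt rs hInv.tail hyy'
        simp only [rowInsert, insPos, ha, hb, hy']
        exact ⟨Nat.succ_le_succ IH.1, IH.2⟩

/-- Row bumping lemma, descent case: inserting `a` then `b` with `b < a`,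
the second box is strictly below and weakly left of the first. -/
lemma bump_gt : ∀ (T : List (List ℕ)) {a b : ℕ}, TabInv T → b < a →
    (insPos T a).1 < (insPos (rowInsert T a) b).1 ∧
      (insPos (rowInsert T a) b).2 ≤ (insPos T a).2
  | [], a, b, _, hab => by
    have : ([a].findIdx? (fun y => b < y)) = some 0 := by
      have := fi_le_of_p (p := fun y => decide (b < y)) (l := [a]) (j := 0) (by simp)
        (by simp [hab])
      obtain ⟨i, hi, hle⟩ := this
      interval_cases i
      exact hi
    simp [rowInsert, insPos, this]
  | r :: rs, a, b, hInv, hab => by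
    cases ha : r.findIdx? (fun y => a < y) with
    | none =>
      -- a appended at (0, r.length); b must bump somewhere in r ++ [a]
      obtain ⟨i', hb, hi'le⟩ := fi_le_of_p (p := fun y => decide (b < y)) (l := r ++ [a])
        (j := r.length) (by simp) (by simp [hab])
      have hlen0 : (rs.getD 0 []).length ≤ r.length := hInv.dom.1
      have hcol : (insPos rs ((r ++ [a]).getD i' 0)).2 ≤ i' := by
        refine ip_col_le rs _ i' hInv.tail ?_
        intro hlt
        have hir : i' < r.length := lt_of_lt_of_le hlt hlen0
        have : (r ++ [a]).getD i' 0 = r.getD i' 0 := by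
          rw [getD_eq_getElem _ _ (by simp; omega), getD_eq_getElem _ _ hir,
            getElem_append_left hir]
        rw [this]
        exact hInv.dom.2 i' hlt
      simp only [rowInsert, insPos, ha, hb]
      exact ⟨Nat.zero_lt_succ _, le_trans hcol hi'le⟩
    | some i =>
      obtain ⟨hi, hp, hmin⟩ := fi_some ha
      simp only [decide_eq_true_eq] at hp
      set y := r.getD i 0 with hy
      have hpi : ((fun z => decide (b < z)) ((r.set i a).getD i 0)) = true := by
        rw [getD_set' hi a, if_pos rfl]
        simp [hab]
      obtain ⟨i', hb, hi'le⟩ := fi_le_of_p (p := fun z => decide (b < z))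
        (l := r.set i a) (j := i) (by simpa using hi) hpi
      rcases eq_or_lt_of_le hi'le with heq | hlt
      · -- i' = i : bumped value is a, recurse with (rs, y, a)
        have hval : (r.set i a).getD i' 0 = a := by
          rw [heq, getD_set' hi a, if_pos rfl]
        have IH := bump_gt rs hInv.tail hp
        simp only [rowInsert, insPos, ha, hb, hval]
        exact ⟨Nat.succ_lt_succ IH.1, IH.2⟩
      · -- i' < i : bumped value is r[i'] < y
        have hy' : (r.set i a).getD i' 0 = r.getD i' 0 :=
          (getD_set' (hlt.trans hi) a).trans (if_neg (by omega))
        have hyy' : r.getD i' 0 < y := sorted_getD_lt (hInv.1 r (mem_cons_self)) hlt hi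
        have IH := bump_gt rs hInv.tail hyy'
        simp only [rowInsert, insPos, ha, hb, hy']
        exact ⟨Nat.succ_lt_succ IH.1, IH.2⟩

lemma rowInsert_ne_nil (T : List (List ℕ)) (x : ℕ) : rowInsert T x ≠ [] := by
  cases T with
  | nil => simp [rowInsert]
  | cons r rs =>
    cases h : r.findIdx? (fun y => x < y) <;> simp [rowInsert, h]

lemma rowInsert_flatten : ∀ (T : List (List ℕ)) (x : ℕ),
    (rowInsert T x).flatten.Perm (x :: T.flatten)
  | [], x => by simp [rowInsert]
  | r :: rs, x => by
    cases h : r.findIdx? (fun y => x < y) with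
    | none =>
      simp only [rowInsert, h, flatten_cons]
      rw [append_assoc]
      exact perm_middle
    | some i =>
      have hi : i < r.length := (fi_some h).1
      set y := r.getD i 0 with hy
      have hset : r.set i x = r.take i ++ x :: r.drop (i + 1) :=
        set_eq_take_cons_drop x hi
      have hr : r = r.take i ++ y :: r.drop (i + 1) := by
        conv_lhs => rw [← take_append_drop i r]
        congr 1
        rw [hy, getD_eq_getElem _ _ hi]
        exact drop_eq_getElem_cons hi
      have hri : rowInsert (r :: rs) x = r.set i x :: rowInsert rs y := by
        simp only [rowInsert, h, hy]
      rw [hri, flatten_cons]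
      calc r.set i x ++ (rowInsert rs y).flatten
          ~ r.set i x ++ (y :: rs.flatten) := Perm.append_left _ (rowInsert_flatten rs y)
        _ = r.take i ++ x :: (r.drop (i+1) ++ y :: rs.flatten) := by
            rw [hset]; simp [append_assoc]
        _ ~ x :: (r.take i ++ (r.drop (i+1) ++ y :: rs.flatten)) := perm_middle
        _ ~ x :: (r ++ rs.flatten) := by
            refine Perm.cons _ ?_
            calc r.take i ++ (r.drop (i+1) ++ y :: rs.flatten)
                ~ r.take i ++ (y :: (r.drop (i+1) ++ rs.flatten)) :=
                  Perm.append_left _ perm_middle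
              _ = (r.take i ++ y :: r.drop (i+1)) ++ rs.flatten := by simp [append_assoc]
              _ = r ++ rs.flatten := by rw [← hr]

/-- If the head row of `rs` is dominated by `R'` and the landing spot of `y`
is bounded, the head row of `rowInsert rs y` is still dominated by `R'`. -/
lemma dom_rowInsert (rs : List (List ℕ)) (y : ℕ) (R' : List ℕ) (i : ℕ)
    (hi : i < R'.length)
    (hdom : Dominates R' (rs.getD 0 []))
    (hup : ∀ j ≤ i, R'.getD j 0 < y)
    (hcol : i < (rs.getD 0 []).length → y < (rs.getD 0 []).getD i 0) :
    Dominates R' ((rowInsert rs y).getD 0 []) := by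
  cases rs with
  | nil =>
    simp only [rowInsert, getD_cons_zero]
    refine ⟨by simp; omega, fun j hj => ?_⟩
    simp only [length_cons, length_nil] at hj
    have hj0 : j = 0 := by omega
    subst hj0
    simpa using hup 0 (Nat.zero_le _)
  | cons r1 rs' =>
    simp only [getD_cons_zero] at hdom hcol
    cases h : r1.findIdx? (fun z => y < z) with
    | none =>
      have hlen : r1.length ≤ i := by
        by_contra hgt
        push_neg at hgt
        have h1 := fi_none h i hgt
        simp only [decide_eq_true_eq] at h1
        exact h1 (hcol (by omega))
      simp only [rowInsert, h, getD_cons_zero]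
      constructor
      · simp; omega
      · intro j hj
        simp only [length_append, length_cons, length_nil] at hj
        rcases lt_or_ge j r1.length with hj1 | hj1
        · rw [getD_eq_getElem (r1 ++ [y]) _ (by simp; omega),
            getElem_append_left hj1, ← getD_eq_getElem _ _ hj1]
          exact hdom.2 j hj1
        · have hje : j = r1.length := by omega
          subst hje
          rw [getD_eq_getElem (r1 ++ [y]) _ (by simp), getElem_append_right (le_refl _)]
          simpa using hup _ hlen
    | some i1 =>
      obtain ⟨hi1, hp1, hmin1⟩ := fi_some h
      simp only [decide_eq_true_eq] at hp1
      have hi1i : i1 ≤ i := by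
        rcases lt_or_ge i r1.length with hlt | hge
        · by_contra hgt
          push_neg at hgt
          have h1 := hmin1 i hgt
          simp only [decide_eq_true_eq] at h1
          exact h1 (hcol hlt)
        · omega
      simp only [rowInsert, h, getD_cons_zero]
      refine ⟨by rw [length_set]; exact hdom.1, fun j hj => ?_⟩
      rw [length_set] at hj
      rw [getD_set' hj y]
      split
      · exact hup j (by omega)
      · exact hdom.2 j hj

lemma tabInv_rowInsert : ∀ (T : List (List ℕ)) (x : ℕ), TabInv T →
    (x :: T.flatten).Nodup → TabInv (rowInsert T x)
  | [], x, _, _ => by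
    constructor
    · intro r hr
      simp [rowInsert] at hr
      simp [hr]
    · simp [rowInsert]
  | r :: rs, x, hInv, hnd => by
    have hxr : x ∉ r := fun hx => (nodup_cons.1 hnd).1 (by simp [flatten_cons]; exact Or.inl hx)
    have hsr : r.Pairwise (· < ·) := hInv.1 r (mem_cons_self)
    cases h : r.findIdx? (fun y => x < y) with
    | none =>
      have hall : ∀ z ∈ r, z < x := by
        intro z hz
        have := (findIdx?_eq_none_iff).1 h z hz
        simp only [decide_eq_false_iff_not, not_lt] at this
        exact lt_of_le_of_ne this (fun he => hxr (he ▸ hz))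
      have hri : rowInsert (r :: rs) x = (r ++ [x]) :: rs := by simp [rowInsert, h]
      rw [hri]
      constructor
      · intro s hs
        rcases mem_cons.1 hs with hs | hs
        · subst hs
          rw [pairwise_append]
          exact ⟨hsr, by simp, fun a ha b hb => by simp at hb; subst hb; exact hall a ha⟩
        · exact hInv.1 s (mem_cons_of_mem _ hs)
      · rw [isChain_cons]
        refine ⟨fun b hb => ?_, hInv.2.tail⟩
        have hb' : b = rs.getD 0 [] := by
          cases rs with
          | nil => simp at hb
          | cons c cs => simp at hb; simp [hb]
        subst hb'
        have hdom := hInv.dom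
        refine ⟨le_trans hdom.1 (by simp), fun j hj => ?_⟩
        have hd1 := hdom.1
        rw [getD_eq_getElem (r ++ [x]) _ (by simp; omega),
          getElem_append_left (lt_of_lt_of_le hj hdom.1),
          ← getD_eq_getElem _ _ (lt_of_lt_of_le hj hdom.1)]
        exact hdom.2 j hj
      | some i =>
      obtain ⟨hi, hp, hmin⟩ := fi_some h
      simp only [decide_eq_true_eq] at hp
      set y := r.getD i 0 with hy
      have hyr : y ∈ r := by rw [hy, getD_eq_getElem _ _ hi]; exact getElem_mem hi
      have hndf : (r ++ rs.flatten).Nodup := by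
        simpa [flatten_cons] using (nodup_cons.1 hnd).2
      have hndy : (y :: rs.flatten).Nodup := by
        rw [nodup_cons]
        obtain ⟨-, h2, h3⟩ := nodup_append.1 hndf
        exact ⟨fun hM => h3 y hyr y hM rfl, h2⟩
      have IH := tabInv_rowInsert rs y hInv.tail hndy
      have hri : rowInsert (r :: rs) x = r.set i x :: rowInsert rs y := by
        simp only [rowInsert, h, hy]
      have hlow : ∀ j < i, r.getD j 0 < x := by
        intro j hj
        have h1 := hmin j hj
        simp only [decide_eq_true_eq, not_lt] at h1
        refine lt_of_le_of_ne h1 (fun he => hxr ?_)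
        rw [← he, getD_eq_getElem _ _ (hj.trans hi)]
        exact getElem_mem _
      have hsort : (r.set i x).Pairwise (· < ·) := by
        rw [pairwise_iff_get]
        intro a b hab
        have hbl : (b : ℕ) < r.length := by simpa using b.isLt
        have hal : (a : ℕ) < r.length := lt_trans hab hbl
        have hfab : (a : ℕ) < (b : ℕ) := hab
        have hxlt : ∀ (j : ℕ) (hj : j < r.length), i < j → x < r[j] := by
          intro j hj hij
          have h1 := sorted_getD_lt hsr hij hj
          rw [getD_eq_getElem _ _ hi, getD_eq_getElem _ _ hj] at h1
          have h2 : x < r[i] := by rw [← getD_eq_getElem _ _ hi]; exact hp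
          omega
        have hltx : ∀ (j : ℕ) (hj : j < r.length), j < i → r[j] < x := by
          intro j hj hji
          have := hlow j hji
          rwa [getD_eq_getElem _ _ hj] at this
        rw [get_eq_getElem, get_eq_getElem, getElem_set, getElem_set]
        by_cases hia : i = (a : ℕ)
        · rw [if_pos hia, if_neg (by omega)]
          exact hxlt b hbl (by omega)
        · rw [if_neg hia]
          by_cases hib : i = (b : ℕ)
          · rw [if_pos hib]
            exact hltx a hal (by omega)
          · rw [if_neg hib]
            have := sorted_getD_lt hsr hfab hbl
            rwa [getD_eq_getElem _ _ hal, getD_eq_getElem _ _ hbl] at this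
      rw [hri]
      constructor
      · intro s hs
        rcases mem_cons.1 hs with hs | hs
        · subst hs; exact hsort
        · exact IH.1 s hs
      · rw [isChain_cons]
        refine ⟨fun b hb => ?_, IH.2⟩
        have hb' : b = (rowInsert rs y).getD 0 [] := by
          obtain ⟨c, cs, hcc⟩ := exists_cons_of_ne_nil (rowInsert_ne_nil rs y)
          rw [hcc] at hb ⊢
          simp at hb
          simp [hb]
        subst hb'
        have hdom := hInv.dom
        refine dom_rowInsert rs y (r.set i x) i (by simpa using hi) ?_ ?_ ?_
        · refine ⟨by rw [length_set]; exact hdom.1, fun j hj => ?_⟩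
          rw [getD_set' (lt_of_lt_of_le hj hdom.1) x]
          split
          · next hij =>
            subst hij
            exact lt_trans hp (hdom.2 _ hj)
          · exact hdom.2 j hj
        · intro j hj
          rw [getD_set' (lt_of_le_of_lt hj hi) x]
          split
          · exact hp
          · next hij =>
            have hjlt : j < i := lt_of_le_of_ne hj (fun he => hij he.symm)
            exact lt_trans (hlow j hjlt) hp
        · intro hlt
          exact hdom.2 i hlt

lemma getD_append_left' {α : Type*} {l1 l2 : List α} {d : α} {j : ℕ} (hj : j < l1.length) :
    (l1 ++ l2).getD j d = l1.getD j d := by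
  rw [getD_eq_getElem _ _ (by simp; omega), getElem_append_left hj, getD_eq_getElem _ _ hj]

lemma getD_append_singleton {α : Type*} {l1 : List α} {d a : α} :
    (l1 ++ [a]).getD l1.length d = a := by
  rw [getD_eq_getElem _ _ (by simp), getElem_append_right (le_refl _)]
  simp

lemma mem_flatten_of_getD {z : ℕ} {Q : List (List ℕ)} {j : ℕ} (hj : j < Q.length)
    (hz : z ∈ Q.getD j []) : z ∈ Q.flatten :=
  mem_flatten.2 ⟨Q.getD j [], by rw [getD_eq_getElem _ _ hj]; exact getElem_mem hj,
    hz⟩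

lemma eq_of_getD {l1 l2 : List ℕ} (hl : l1.length = l2.length)
    (h : ∀ j, l1.getD j 0 = l2.getD j 0) : l1 = l2 := by
  refine ext_getElem hl fun j h1 h2 => ?_
  rw [← getD_eq_getElem l1 0 h1, ← getD_eq_getElem l2 0 h2]
  exact h j

lemma addBox_length {Q : List (List ℕ)} {R k : ℕ} (hR : R ≤ Q.length) :
    (addBox Q R k).length = if R < Q.length then Q.length else Q.length + 1 := by
  unfold addBox
  split <;> simp_all

lemma addBox_getD {Q : List (List ℕ)} {R k : ℕ} (hR : R ≤ Q.length) (j : ℕ) :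
    (addBox Q R k).getD j [] = if j = R then Q.getD R [] ++ [k] else Q.getD j [] := by
  unfold addBox
  rcases lt_or_ge R Q.length with h | h
  · rw [if_pos h]
    rcases lt_or_ge j Q.length with hj | hj
    · rw [getD_set' hj]
      split
      · next he => rw [if_pos he.symm, he]
      · next he => rw [if_neg (fun hh => he hh.symm)]
    · rw [getD_eq_default _ _ (by simpa using hj), if_neg (by omega),
        getD_eq_default _ _ (by omega)]
  · have hRe : R = Q.length := le_antisymm hR h
    rw [if_neg (by omega)]
    rcases lt_or_ge j Q.length with hj | hj
    · rw [getD_append_left' hj, if_neg (by omega)]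
    · rcases eq_or_lt_of_le hj with he | hlt
      · have hjR2 : j = R := by omega
        rw [if_pos hjR2, hRe, getD_eq_default Q _ (le_refl _), ← he]
        simpa using (getD_append_singleton (l1 := Q) (d := ([] : List ℕ)) (a := [k]))
      · rw [getD_eq_default _ _ (by simp; omega), if_neg (by omega),
          getD_eq_default _ _ (by omega)]

lemma mem_addBox {z : ℕ} {Q : List (List ℕ)} {R k : ℕ} (hR : R ≤ Q.length)
    (hz : z ∈ (addBox Q R k).flatten) : z ∈ Q.flatten ∨ z = k := by
  obtain ⟨l, hl, hzl⟩ := mem_flatten.1 hz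
  obtain ⟨j, hj, rfl⟩ := getElem_of_mem hl
  rw [← getD_eq_getElem _ _ hj, addBox_getD hR j] at hzl
  by_cases hjR : j = R
  · rw [if_pos hjR] at hzl
    rcases mem_append.1 hzl with h1 | h1
    · rcases lt_or_ge R Q.length with h2 | h2
      · exact Or.inl (mem_flatten_of_getD h2 h1)
      · rw [getD_eq_default _ _ h2] at h1; simp at h1
    · simp at h1; exact Or.inr h1
  · rw [if_neg hjR] at hzl
    rcases lt_or_ge j Q.length with h2 | h2
    · exact Or.inl (mem_flatten_of_getD h2 hzl)
    · rw [getD_eq_default _ _ h2] at hzl; simp at hzl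

/-- The row chosen in the `RSpair` fold is the row of the new box. -/
lemma findIdx_shape (P : List (List ℕ)) (x : ℕ) :
    (List.range (rowInsert P x).length).findIdx
      (fun j => (shapeOf P).getD j 0 ≠ (shapeOf (rowInsert P x)).getD j 0)
      = (insPos P x).1 := by
  have hlen : (insPos P x).1 < (List.range (rowInsert P x).length).length := by
    rw [length_range, length_rowInsert]; omega
  rw [findIdx_eq hlen]
  constructor
  · rw [getElem_range]
    simp only [shape_rowInsert, if_pos rfl]
    simp
  · intro j hj
    rw [getElem_range]
    simp only [shape_rowInsert, if_neg (by omega : ¬ j = (insPos P x).1)]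
    simp

def rsStep (PQ : List (List ℕ) × List (List ℕ)) (ix : ℕ × ℕ) :
    List (List ℕ) × List (List ℕ) :=
  let P' := rowInsert PQ.1 ix.2
  let row := (List.range P'.length).findIdx
    (fun j => (shapeOf PQ.1).getD j 0 ≠ (shapeOf P').getD j 0)
  (P', addBox PQ.2 row (ix.1 + 1))

lemma RSpair_eq (w : List ℕ) : RSpair w = (w.zipIdx.map Prod.swap).foldl rsStep ([], []) := rfl

def PQs (w : List ℕ) (k : ℕ) : List (List ℕ) × List (List ℕ) :=
  ((w.zipIdx.map Prod.swap).take k).foldl rsStep ([], [])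

lemma PQs_zero (w : List ℕ) : PQs w 0 = ([], []) := rfl

lemma PQs_full (w : List ℕ) : PQs w w.length = RSpair w := by
  rw [RSpair_eq, PQs, take_of_length_le (by simp)]

lemma PQs_succ (w : List ℕ) (k : ℕ) (hk : k < w.length) :
    PQs w (k+1) = rsStep (PQs w k) (k, w.getD k 0) := by
  rw [PQs, take_succ]
  have h : (w.zipIdx.map Prod.swap)[k]? = some (k, w.getD k 0) := by
    rw [getElem?_eq_getElem (by simpa using hk), getElem_map, getElem_zipIdx,
      getD_eq_getElem _ _ hk]
    simp
  rw [h]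
  simp [foldl_append, PQs]

lemma rsStep_eval (P Q : List (List ℕ)) (k x : ℕ) :
    rsStep (P, Q) (k, x) = (rowInsert P x, addBox Q (insPos P x).1 (k+1)) := by
  show (rowInsert P x, addBox Q ((List.range (rowInsert P x).length).findIdx
    (fun j => (shapeOf P).getD j 0 ≠ (shapeOf (rowInsert P x)).getD j 0)) (k+1)) = _
  rw [findIdx_shape]

/-- position of the box labelled `m` in the recording tableau. -/
def rsPos (w : List ℕ) (m : ℕ) : ℕ × ℕ := insPos (PQs w (m-1)).1 (w.getD (m-1) 0)

lemma rs_invariant (w : List ℕ) (hw : w.Nodup) :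
    ∀ k, k ≤ w.length →
    TabInv (PQs w k).1 ∧
    ((PQs w k).1.flatten).Perm (w.take k) ∧
    shapeOf (PQs w k).2 = shapeOf (PQs w k).1 ∧
    (∀ z ∈ (PQs w k).2.flatten, 1 ≤ z ∧ z ≤ k) ∧
    (∀ m, 1 ≤ m → m ≤ k →
      (rsPos w m).1 < (PQs w k).2.length ∧
      (rsPos w m).2 < ((PQs w k).2.getD (rsPos w m).1 []).length ∧
      ((PQs w k).2.getD (rsPos w m).1 []).getD (rsPos w m).2 0 = m ∧
      (∀ r < (rsPos w m).1, m ∉ (PQs w k).2.getD r []) ∧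
      (∀ j < (rsPos w m).2, ((PQs w k).2.getD (rsPos w m).1 []).getD j 0 ≠ m)) := by
  intro k
  induction k with
  | zero =>
    intro _
    refine ⟨⟨by simp [PQs_zero], by simp [PQs_zero]⟩, by simp [PQs_zero],
      by simp [PQs_zero], by simp [PQs_zero], fun m hm1 hm0 => by omega⟩
  | succ k IH =>
    intro hk1
    obtain ⟨hInv, hperm, hshape, hbound, hposs⟩ := IH (by omega)
    set P := (PQs w k).1 with hPdef
    set Q := (PQs w k).2 with hQdef
    set x := w.getD k 0 with hxdef
    have hsplit : PQs w k = (P, Q) := rfl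
    have hPQ : PQs w (k+1) = (rowInsert P x, addBox Q (insPos P x).1 (k+1)) := by
      rw [PQs_succ w k (by omega), hsplit, rsStep_eval]
    set R := (insPos P x).1 with hRdef
    have hQPl : Q.length = P.length := by
      have := congrArg List.length hshape
      simpa [shapeOf] using this
    have hRle : R ≤ Q.length := by rw [hQPl]; exact insPos_fst_le P x
    -- freshness of x
    have htks : w.take (k+1) = w.take k ++ [x] := by
      rw [take_succ, getElem?_eq_getElem (by omega), hxdef, getD_eq_getElem _ _ (by omega)]
      rfl
    have htknd : (w.take (k+1)).Nodup := hw.sublist (take_sublist _ _)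
    have hxtk : x ∉ w.take k ∧ (w.take k).Nodup := by
      rw [htks] at htknd
      obtain ⟨h1, h2, h3⟩ := nodup_append.1 htknd
      exact ⟨fun hc => h3 x hc x (by simp) rfl, h1⟩
    have hfresh : (x :: P.flatten).Nodup := by
      rw [nodup_cons]
      exact ⟨fun hc => hxtk.1 (hperm.mem_iff.1 hc), hperm.nodup_iff.2 hxtk.2⟩
    have hnewInv : TabInv (rowInsert P x) := tabInv_rowInsert P x hInv hfresh
    have hnewperm : (rowInsert P x).flatten.Perm (w.take (k+1)) := by
      rw [htks]
      have h4 : (x :: w.take k).Perm (w.take k ++ [x]) := by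
        simpa using (perm_middle (a := x) (l₁ := w.take k) (l₂ := ([] : List ℕ))).symm
      exact (rowInsert_flatten P x).trans ((hperm.cons x).trans h4)
    -- shape equality
    have hnewshape : shapeOf (addBox Q R (k+1)) = shapeOf (rowInsert P x) := by
      refine eq_of_getD ?_ ?_
      · have h1 : (shapeOf (addBox Q R (k+1))).length = (addBox Q R (k+1)).length := by
          simp [shapeOf]
        have h2 : (shapeOf (rowInsert P x)).length = (rowInsert P x).length := by
          simp [shapeOf]
        rw [h1, h2, addBox_length hRle, length_rowInsert, ← hRdef, hQPl]
        have := insPos_fst_le P x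
        rw [← hRdef] at this
        split <;> omega
      · intro j
        rw [shape_getD, addBox_getD hRle j, shape_rowInsert]
        by_cases he : j = R
        · rw [if_pos he, if_pos (by rw [he]), he, length_append, length_cons, length_nil,
            ← hshape, shape_getD]
          omega
        · rw [if_neg he, if_neg (by rw [hRdef] at he; exact he), ← hshape, shape_getD]
          omega
    -- entry bounds
    have hnewbound : ∀ z ∈ (addBox Q R (k+1)).flatten, 1 ≤ z ∧ z ≤ k + 1 := by
      intro z hz
      rcases mem_addBox hRle hz with h1 | h1
      · have := hbound z h1; omega
      · omega
    have hP1 : (PQs w (k+1)).1 = rowInsert P x := by rw [hPQ]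
    have hQ1 : (PQs w (k+1)).2 = addBox Q R (k+1) := by rw [hPQ]
    rw [hP1, hQ1]
    refine ⟨hnewInv, hnewperm, hnewshape, hnewbound, fun m hm1 hm2 => ?_⟩
    rcases Nat.lt_or_ge m (k+1) with hmk | hmk
    · -- old labels: positions unchanged
      have hmk' : m ≤ k := by omega
      obtain ⟨o1, o2, o3, o4, o5⟩ := hposs m hm1 hmk'
      have hrow : (addBox Q R (k+1)).getD (rsPos w m).1 [] =
          if (rsPos w m).1 = R then Q.getD R [] ++ [k+1] else Q.getD (rsPos w m).1 [] :=
        addBox_getD hRle _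
      have hlen2 : Q.length ≤ (addBox Q R (k+1)).length := by
        rw [addBox_length hRle]; split <;> omega
      refine ⟨by omega, ?_, ?_, ?_, ?_⟩
      · rw [hrow]; split
        · next he =>
            rw [← he, length_append, length_cons, length_nil]
            omega
        · exact o2
      · rw [hrow]; split
        · next he =>
            rw [← he] at *
            rw [getD_append_left' o2]
            exact o3
        · exact o3
      · intro r hr
        rw [addBox_getD hRle r]
        split
        · next he =>
            rw [mem_append]
            rintro (hc | hc)
            · exact o4 R (he ▸ hr) hc
            · simp at hc; omega
        · exact o4 r hr
      · intro j hj
        rw [hrow]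
        split
        · next he =>
            rw [← he] at *
            rw [getD_append_left' (by omega)]
            exact o5 j hj
        · exact o5 j hj
    · -- the new label k+1
      have hme : m = k + 1 := by omega
      subst hme
      have hpos : rsPos w (k+1) = insPos P x := by
        simp only [rsPos, Nat.add_sub_cancel]
        rfl
      have hc2 : (insPos P x).2 = (Q.getD R []).length := by
        rw [insPos_snd, ← hRdef, ← hshape, shape_getD]
      have hrowR : (addBox Q R (k+1)).getD R [] = Q.getD R [] ++ [k+1] := by
        rw [addBox_getD hRle R, if_pos rfl]
      refine ⟨?_, ?_, ?_, ?_, ?_⟩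
      · rw [hpos, ← hRdef, addBox_length hRle]
        split <;> omega
      · rw [hpos, ← hRdef, hc2, hrowR, length_append, length_cons, length_nil]
        omega
      · rw [hpos, ← hRdef, hc2, hrowR]
        exact getD_append_singleton
      · intro r hr
        rw [hpos, ← hRdef] at hr
        rw [addBox_getD hRle r, if_neg (by omega)]
        intro hc
        have hrQ : r < Q.length := by omega
        have := hbound _ (mem_flatten_of_getD hrQ hc)
        omega
      · intro j hj
        rw [hpos] at hj ⊢
        rw [hc2] at hj
        rw [← hRdef, hrowR, getD_append_left' hj]
        intro hc
        have hjm : (Q.getD R []).getD j 0 ∈ Q.getD R [] := by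
          rw [getD_eq_getElem _ _ hj]
          exact getElem_mem hj
        have hRlt : R < Q.length := by
          by_contra hge
          rw [getD_eq_default _ _ (by omega)] at hj
          simp at hj
        have := hbound _ (mem_flatten_of_getD hRlt hjm)
        omega

lemma rowOf_colOf_eq {Q : List (List ℕ)} {m pr pc : ℕ}
    (h1 : pr < Q.length) (h2 : pc < (Q.getD pr []).length)
    (h3 : (Q.getD pr []).getD pc 0 = m)
    (h4 : ∀ r < pr, m ∉ Q.getD r [])
    (h5 : ∀ j < pc, (Q.getD pr []).getD j 0 ≠ m) :
    rowOf Q m = pr ∧ colOf Q m = pc := by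
  have hm : m ∈ Q.getD pr [] := by
    rw [← h3, getD_eq_getElem _ _ h2]
    exact getElem_mem h2
  have hrow : rowOf Q m = pr := by
    unfold rowOf
    rw [findIdx_eq h1]
    constructor
    · simp only [decide_eq_true_eq]
      rwa [← getD_eq_getElem _ _ h1]
    · intro j hj
      have := h4 j hj
      rw [getD_eq_getElem Q _ (hj.trans h1)] at this
      simpa using this
  refine ⟨hrow, ?_⟩
  unfold colOf
  rw [hrow, findIdx_eq h2]
  constructor
  · simp only [decide_eq_true_eq]
    rw [← getD_eq_getElem _ _ h2]
    exact h3
  · intro j hj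
    have := h5 j hj
    rw [getD_eq_getElem _ _ (hj.trans h2)] at this
    simpa using this


/-- For `w ∈ Sₙ` and `1 ≤ i ≤ n − 1`, the simple transposition `sᵢ` is a right
descent of `w` (i.e. `w(i) > w(i+1)`) if and only if `i` lies in the tableau
descent set of the recording tableau `Q(w)`, i.e. `i+1` lies strictly below and
weakly to the left of `i` in `Q(w)`. -/
theorem right_descent_iff_tableau_descent
    {n : ℕ} (w : Equiv.Perm (Fin n)) (i : ℕ) (h1 : 1 ≤ i) (h2 : i < n) :
    (permWord w).getD i 0 < (permWord w).getD (i - 1) 0 ↔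
      (rowOf (RSQ w) i < rowOf (RSQ w) (i + 1) ∧
        colOf (RSQ w) (i + 1) ≤ colOf (RSQ w) i) := by
  set w' := permWord w with hw'
  have hlen : w'.length = n := by simp [hw', permWord]
  have hnodup : w'.Nodup := by
    rw [hw', permWord, nodup_ofFn]
    intro s t hst
    simp only [Nat.add_right_cancel_iff] at hst
    exact w.injective (Fin.val_injective hst)
  set a := w'.getD (i-1) 0 with hadef
  set b := w'.getD i 0 with hbdef
  have hval : ∀ j (hj : j < n), w'.getD j 0 = (w ⟨j, hj⟩ : ℕ) + 1 := by
    intro j hj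
    rw [hw', permWord, getD_eq_getElem _ _ (by simpa using hj)]
    simp [List.getElem_ofFn]
  have hne : a ≠ b := by
    rw [hadef, hbdef, hval (i-1) (by omega), hval i h2]
    intro hc
    have hc2 : (w ⟨i-1, by omega⟩ : ℕ) = (w ⟨i, h2⟩ : ℕ) := by omega
    have := w.injective (Fin.val_injective hc2)
    rw [Fin.mk.injEq] at this
    omega
  -- the intermediate tableaux
  set P := (PQs w' (i-1)).1 with hPdef
  have hInvP : TabInv P := (rs_invariant w' hnodup (i-1) (by omega)).1
  have h5 : (i-1) + 1 = i := by omega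
  have h6 : PQs w' i = rsStep (PQs w' (i-1)) (i-1, a) := by
    conv_lhs => rw [← h5]
    exact PQs_succ w' (i-1) (by omega)
  have h7 : (PQs w' i).1 = rowInsert P a := by
    rw [h6, show PQs w' (i-1) = (P, (PQs w' (i-1)).2) from rfl, rsStep_eval]
  have hposi : rsPos w' i = insPos P a := rfl
  have hposi1 : rsPos w' (i+1) = insPos (rowInsert P a) b := by
    show insPos (PQs w' ((i+1)-1)).1 (w'.getD ((i+1)-1) 0) = _
    rw [Nat.add_sub_cancel, h7]
  -- positions in the recording tableau
  have hQn : RSQ w = (PQs w' n).2 := by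
    rw [RSQ, ← hw', ← PQs_full, hlen]
  obtain ⟨-, -, -, -, hposs⟩ := rs_invariant w' hnodup n (by omega)
  obtain ⟨p1, p2, p3, p4, p5⟩ := hposs i h1 (by omega)
  obtain ⟨q1, q2, q3, q4, q5⟩ := hposs (i+1) (by omega) (by omega)
  obtain ⟨hri, hci⟩ := rowOf_colOf_eq p1 p2 p3 p4 p5
  obtain ⟨hri1, hci1⟩ := rowOf_colOf_eq q1 q2 q3 q4 q5
  rw [hQn, hri, hci, hri1, hci1, hposi, hposi1]
  constructor
  · intro hba
    exact ⟨(bump_gt P hInvP hba).1, (bump_gt P hInvP hba).2⟩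
  · rintro ⟨hrow, -⟩
    rcases lt_trichotomy a b with hab | hab | hab
    · exact absurd hrow (by have := (bump_lt P hInvP hab).1; omega)
    · exact absurd hab hne
    · exact hab
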